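/- Let d ≥ 1, α > 0 with 2α < d, and let ρ be a probability measure on ℝ^d whose characteristic function satisfies ρ̂(z) = exp(−‖z‖^α) for all z ∈ ℝ^d (a symmetric α-stable distribution). Let U := Σ_{n=0}^∞ ρ^{*n} and U⁻ := Σ_{n=0}^∞ (ρ⁻)^{*n} with ρ⁻ := ρ(−·). Then (U * U⁻)(B_0^r) < ∞ for every r > 0, i.e. U * U⁻ is a locally finite measure. -/

import Mathlib

open MeasureTheory

/-- Convolution of two measures on `ℝ^d`: the pushforward of the product measure
under addition. -/
noncomputable def mconv {d : ℕ} (μ ν : Measure (EuclideanSpace ℝ (Fin d))) :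
    Measure (EuclideanSpace ℝ (Fin d)) :=
  Measure.map (fun p => p.1 + p.2) (μ.prod ν)

/-- Convolution powers: `ρ^{*0} = δ_0`, `ρ^{*(n+1)} = ρ^{*n} * ρ`. -/
noncomputable def convPow {d : ℕ} (ρ : Measure (EuclideanSpace ℝ (Fin d))) :
    ℕ → Measure (EuclideanSpace ℝ (Fin d))
  | 0 => Measure.dirac 0
  | n + 1 => mconv (convPow ρ n) ρ

/-- Expected occupation measure `U = Σ_{n≥0} ρ^{*n}` of the random walk with step
distribution `ρ`. -/
noncomputable def occMeasure {d : ℕ} (ρ : Measure (EuclideanSpace ℝ (Fin d))) :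
    Measure (EuclideanSpace ℝ (Fin d)) :=
  Measure.sum (fun n => convPow ρ n)

/-- Reflected measure `ρ⁻ = ρ(−·)`. -/
noncomputable def mrefl {d : ℕ} (ρ : Measure (EuclideanSpace ℝ (Fin d))) :
    Measure (EuclideanSpace ℝ (Fin d)) :=
  Measure.map (fun x => -x) ρ

section Aux

open Complex Real Filter

variable {d : ℕ}

noncomputable def charf (μ : Measure (EuclideanSpace ℝ (Fin d))) (z : EuclideanSpace ℝ (Fin d)) : ℂ :=
  ∫ x, Complex.exp (Complex.I * ((inner ℝ z x : ℝ) : ℂ)) ∂μ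

lemma cont_charf_integrand (z : EuclideanSpace ℝ (Fin d)) :
    Continuous (fun x : EuclideanSpace ℝ (Fin d) => Complex.exp (Complex.I * ((inner ℝ z x : ℝ) : ℂ))) := by
  exact Complex.continuous_exp.comp ((continuous_const.mul (Complex.continuous_ofReal.comp
    ((continuous_const.inner continuous_id)))))

instance mconv_prob (μ ν : Measure (EuclideanSpace ℝ (Fin d))) [IsProbabilityMeasure μ]
    [IsProbabilityMeasure ν] : IsProbabilityMeasure (mconv μ ν) :=
  Measure.isProbabilityMeasure_map (by fun_prop)

lemma charf_mconv (μ ν : Measure (EuclideanSpace ℝ (Fin d))) [IsProbabilityMeasure μ]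
    [IsProbabilityMeasure ν] (z : EuclideanSpace ℝ (Fin d)) :
    charf (mconv μ ν) z = charf μ z * charf ν z := by
  rw [charf, mconv, integral_map (by fun_prop) (cont_charf_integrand z).aestronglyMeasurable]
  rw [show charf μ z * charf ν z = ∫ p : EuclideanSpace ℝ (Fin d) × EuclideanSpace ℝ (Fin d),
      (Complex.exp (Complex.I * ((inner ℝ z p.1 : ℝ) : ℂ))) *
      (Complex.exp (Complex.I * ((inner ℝ z p.2 : ℝ) : ℂ))) ∂(μ.prod ν)
    from (integral_prod_mul _ _).symm]
  congr 1
  ext p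
  rw [← Complex.exp_add, inner_add_right]
  push_cast
  ring_nf


instance mrefl_prob (ρ : Measure (EuclideanSpace ℝ (Fin d))) [IsProbabilityMeasure ρ] :
    IsProbabilityMeasure (mrefl ρ) :=
  Measure.isProbabilityMeasure_map (by fun_prop)

instance convPow_prob (ρ : Measure (EuclideanSpace ℝ (Fin d))) [IsProbabilityMeasure ρ] (n : ℕ) :
    IsProbabilityMeasure (convPow ρ n) := by
  induction n with
  | zero => exact Measure.dirac.isProbabilityMeasure
  | succ n ih => exact mconv_prob _ _

lemma charf_dirac (z : EuclideanSpace ℝ (Fin d)) : charf (Measure.dirac 0) z = 1 := by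
  rw [charf, integral_dirac]
  simp

lemma charf_convPow (ρ : Measure (EuclideanSpace ℝ (Fin d))) [IsProbabilityMeasure ρ]
    {α : ℝ} (hchar : ∀ z : EuclideanSpace ℝ (Fin d), charf ρ z = ((Real.exp (-(‖z‖ ^ α)) : ℝ) : ℂ))
    (n : ℕ) (z : EuclideanSpace ℝ (Fin d)) :
    charf (convPow ρ n) z = ((Real.exp (-(n * ‖z‖ ^ α)) : ℝ) : ℂ) := by
  induction n with
  | zero => simpa [convPow] using charf_dirac z
  | succ n ih =>
    rw [show convPow ρ (n+1) = mconv (convPow ρ n) ρ from rfl, charf_mconv, ih, hchar]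
    push_cast
    rw [← Complex.exp_add]
    congr 1
    ring

lemma charf_mrefl (ρ : Measure (EuclideanSpace ℝ (Fin d))) [IsProbabilityMeasure ρ]
    {α : ℝ} (hchar : ∀ z : EuclideanSpace ℝ (Fin d), charf ρ z = ((Real.exp (-(‖z‖ ^ α)) : ℝ) : ℂ))
    (z : EuclideanSpace ℝ (Fin d)) :
    charf (mrefl ρ) z = ((Real.exp (-(‖z‖ ^ α)) : ℝ) : ℂ) := by
  rw [charf, mrefl, integral_map (by fun_prop) (cont_charf_integrand z).aestronglyMeasurable]
  have : ∀ x : EuclideanSpace ℝ (Fin d), (inner ℝ z (-x) : ℝ) = (inner ℝ (-z) x : ℝ) := by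
    intro x; rw [inner_neg_right, ← inner_neg_left]
  simp_rw [this]
  rw [← charf, hchar (-z), norm_neg]


lemma gauss_fourier (x : EuclideanSpace ℝ (Fin d)) :
    ∫ z : EuclideanSpace ℝ (Fin d), Complex.exp (-(1/2 : ℂ) * (‖z‖ : ℂ)^2) *
      Complex.exp (Complex.I * ((inner ℝ z x : ℝ) : ℂ)) =
    (((2*π : ℝ)^((d:ℝ)/2) : ℝ) : ℂ) * Complex.exp (-(1/2 : ℂ) * (‖x‖ : ℂ)^2) := by
  have hb : (0:ℝ) < (1/2 : ℂ).re := by norm_num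
  have H := fourier_gaussian_innerProductSpace (V := EuclideanSpace ℝ (Fin d))
    (b := (1/2 : ℂ)) hb (-(2*π)⁻¹ • x)
  rw [Real.fourier_eq'] at H
  have h2π : (2*π : ℝ) ≠ 0 := by positivity
  have hinner : ∀ v : EuclideanSpace ℝ (Fin d),
      (-2) * π * (inner ℝ v (-(2*π)⁻¹ • x) : ℝ) = (inner ℝ v x : ℝ) := by
    intro v
    rw [real_inner_smul_right]
    field_simp
  simp_rw [hinner] at H
  have hLHS : ∀ v : EuclideanSpace ℝ (Fin d),
      Complex.exp (((inner ℝ v x : ℝ) : ℂ) * Complex.I) • Complex.exp (-(1/2:ℂ) * (‖v‖:ℂ)^2)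
        = Complex.exp (-(1/2 : ℂ) * (‖v‖ : ℂ)^2) * Complex.exp (Complex.I * ((inner ℝ v x : ℝ) : ℂ)) := by
    intro v
    rw [smul_eq_mul]
    ring_nf
  simp_rw [hLHS] at H
  rw [H]
  have hfr : (Module.finrank ℝ (EuclideanSpace ℝ (Fin d)) : ℂ) = (d : ℂ) := by
    rw [finrank_euclideanSpace_fin]
  have hnorm : ‖(-(2*π)⁻¹ • x : EuclideanSpace ℝ (Fin d))‖ = (2*π)⁻¹ * ‖x‖ := by
    rw [norm_smul]
    simp [abs_of_nonneg, Real.pi_nonneg]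
  rw [hnorm, hfr]
  congr 1
  · rw [show (π : ℂ) / (1/2 : ℂ) = ((2*π : ℝ) : ℂ) by push_cast; ring,
      show ((d : ℂ)/2) = (((d:ℝ)/2 : ℝ) : ℂ) by push_cast; ring,
      ← Complex.ofReal_cpow (by positivity)]
  · congr 1
    push_cast
    have : (π : ℂ) ≠ 0 := by exact_mod_cast Real.pi_ne_zero
    field_simp


lemma poly_exp_bound {α : ℝ} (hα : 0 < α) (d : ℕ) :
    ∃ C : ℝ, 0 < C ∧ ∀ s : ℝ, 0 ≤ s → (1+s)^((d:ℝ)+1) * Real.exp (-s^α) ≤ C := by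
  set g : ℝ → ℝ := fun s => (1+s)^((d:ℝ)+1) * Real.exp (-s^α) with hg
  have hcont : Continuous g := by
    apply Continuous.mul
    · apply Continuous.rpow_const (by continuity)
      intro s; right; positivity
    · exact Real.continuous_exp.comp (Continuous.neg
        (continuous_iff_continuousAt.2 fun s =>
          Real.continuousAt_rpow_const s α (Or.inr hα.le)))
  have htend : Tendsto g atTop (nhds 0) := by
    have h1 : Tendsto (fun u : ℝ => u ^ (((d:ℝ)+1)/α) * Real.exp (-1 * u)) atTop (nhds 0) :=
      tendsto_rpow_mul_exp_neg_mul_atTop_nhds_zero _ 1 one_pos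
    have h3 := h1.comp (tendsto_rpow_atTop hα)
    have h4 : Tendsto (fun s : ℝ => (2:ℝ)^((d:ℝ)+1) * ((s^α) ^ (((d:ℝ)+1)/α) * Real.exp (-1 * s^α)))
        atTop (nhds 0) := by
      simpa using h3.const_mul ((2:ℝ)^((d:ℝ)+1))
    refine squeeze_zero' ?_ ?_ h4
    · filter_upwards [eventually_ge_atTop (0:ℝ)] with s hs
      exact mul_nonneg (Real.rpow_nonneg (by linarith) _) (Real.exp_nonneg _)
    · filter_upwards [eventually_ge_atTop (1:ℝ)] with s hs
      have hs0 : (0:ℝ) ≤ s := le_trans zero_le_one hs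
      have e2 : (s^α) ^ (((d:ℝ)+1)/α) = s^((d:ℝ)+1) := by
        rw [← Real.rpow_mul hs0]
        congr 1
        field_simp
      rw [e2, hg]
      simp only [neg_one_mul]
      have e1 : (1+s)^((d:ℝ)+1) ≤ 2^((d:ℝ)+1) * s^((d:ℝ)+1) := by
        rw [← Real.mul_rpow (by norm_num) hs0]
        exact Real.rpow_le_rpow (by positivity) (by linarith) (by positivity)
      have := mul_le_mul_of_nonneg_right e1 (Real.exp_nonneg (-s^α))
      calc (1+s)^((d:ℝ)+1) * Real.exp (-s^α) ≤ 2^((d:ℝ)+1) * s^((d:ℝ)+1) * Real.exp (-s^α) := this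
        _ = 2^((d:ℝ)+1) * (s^((d:ℝ)+1) * Real.exp (-s^α)) := by ring
  obtain ⟨s0, hs0⟩ := (htend.eventually_lt_const one_pos).exists_forall_of_atTop
  set s1 := max s0 0 with hs1
  obtain ⟨C, hC⟩ := (isCompact_Icc (a := (0:ℝ)) (b := s1)).exists_bound_of_continuousOn
    hcont.continuousOn
  refine ⟨max C 1, lt_of_lt_of_le one_pos (le_max_right _ _), fun s hs => ?_⟩
  by_cases hcase : s ≤ s1
  · calc g s ≤ ‖g s‖ := le_abs_self _
      _ ≤ C := hC s ⟨hs, hcase⟩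
      _ ≤ max C 1 := le_max_left _ _
  · push_neg at hcase
    have : g s < 1 := hs0 s (le_trans (le_max_left _ _) hcase.le)
    exact le_trans this.le (le_max_right _ _)

lemma integrable_exp_norm_rpow {α : ℝ} (hα : 0 < α) :
    Integrable (fun x : EuclideanSpace ℝ (Fin d) => Real.exp (-‖x‖^α)) := by
  obtain ⟨C, hC0, hC⟩ := poly_exp_bound hα d
  have hbase : Integrable (fun x : EuclideanSpace ℝ (Fin d) => C * (1+‖x‖)^(-((d:ℝ)+1))) := by
    apply Integrable.const_mul
    apply integrable_one_add_norm (μ := volume)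
    rw [finrank_euclideanSpace_fin]
    linarith
  apply hbase.mono'
  · apply Continuous.aestronglyMeasurable
    exact Real.continuous_exp.comp (Continuous.neg
      (continuous_iff_continuousAt.2 fun s =>
        (Real.continuousAt_rpow_const _ α (Or.inr hα.le)).comp continuous_norm.continuousAt))
  · refine Eventually.of_forall fun x => ?_
    have h1 : (0:ℝ) < (1+‖x‖)^((d:ℝ)+1) := Real.rpow_pos_of_pos (by positivity) _
    have h2 : Real.exp (-‖x‖^α) * (1+‖x‖)^((d:ℝ)+1) ≤ C := by
      rw [mul_comm]; exact hC _ (norm_nonneg _)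
    rw [Real.norm_eq_abs, _root_.abs_of_nonneg (Real.exp_nonneg _),
      Real.rpow_neg (by positivity), ← div_eq_mul_inv, le_div_iff₀ h1]
    exact h2

lemma exp_rpow_scaling {α t : ℝ} (hα : 0 < α) (ht : 0 < t) :
    ∫ z : EuclideanSpace ℝ (Fin d), Real.exp (-(t * ‖z‖^α)) =
      t^(-((d:ℝ)/α)) * ∫ w : EuclideanSpace ℝ (Fin d), Real.exp (-‖w‖^α) := by
  have hR : (0:ℝ) < t ^ α⁻¹ := Real.rpow_pos_of_pos ht _
  have key := MeasureTheory.Measure.integral_comp_smul (μ := (volume : Measure (EuclideanSpace ℝ (Fin d))))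
    (fun w => Real.exp (-‖w‖^α)) (t ^ α⁻¹)
  have h1 : ∀ x : EuclideanSpace ℝ (Fin d),
      Real.exp (-‖(t^α⁻¹ : ℝ) • x‖^α) = Real.exp (-(t * ‖x‖^α)) := by
    intro x
    congr 1
    rw [norm_smul, Real.norm_eq_abs, abs_of_pos hR, Real.mul_rpow hR.le (norm_nonneg _),
      ← Real.rpow_mul ht.le]
    rw [inv_mul_cancel₀ hα.ne', Real.rpow_one]
  simp_rw [h1] at key
  have h2 : |(((t^α⁻¹ : ℝ)) ^ Module.finrank ℝ (EuclideanSpace ℝ (Fin d)))⁻¹| = t^(-((d:ℝ)/α)) := by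
    rw [finrank_euclideanSpace_fin, abs_of_pos (by positivity),
      ← Real.rpow_natCast (t^α⁻¹ : ℝ) d, ← Real.rpow_mul ht.le, ← Real.rpow_neg ht.le]
    congr 1
    rw [div_eq_mul_inv]; ring
  rw [key, h2, smul_eq_mul]

lemma integrable_exp_t_rpow {α t : ℝ} (hα : 0 < α) (ht : 1 ≤ t) :
    Integrable (fun z : EuclideanSpace ℝ (Fin d) => Real.exp (-(t * ‖z‖^α))) := by
  apply (integrable_exp_norm_rpow hα).mono'
  · apply Continuous.aestronglyMeasurable
    apply Real.continuous_exp.comp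
    apply Continuous.neg
    apply Continuous.mul continuous_const
    exact (continuous_iff_continuousAt.2 fun s =>
      (Real.continuousAt_rpow_const _ α (Or.inr hα.le)).comp continuous_norm.continuousAt)
  · refine Eventually.of_forall fun z => ?_
    rw [Real.norm_eq_abs, _root_.abs_of_nonneg (Real.exp_nonneg _), Real.exp_le_exp]
    have : (0:ℝ) ≤ ‖z‖^α := Real.rpow_nonneg (norm_nonneg _) _
    nlinarith

lemma J_bound {α t : ℝ} (hα : 0 < α) (ht : 1 ≤ t) :
    ∫ z : EuclideanSpace ℝ (Fin d), Real.exp (-(1/2) * ‖z‖^2) * Real.exp (-(t * ‖z‖^α)) ≤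
      t^(-((d:ℝ)/α)) * ∫ w : EuclideanSpace ℝ (Fin d), Real.exp (-‖w‖^α) := by
  rw [← exp_rpow_scaling hα (lt_of_lt_of_le one_pos ht)]
  have int2 := integrable_exp_t_rpow (d := d) hα ht
  have int1 : Integrable (fun z : EuclideanSpace ℝ (Fin d) =>
      Real.exp (-(1/2) * ‖z‖^2) * Real.exp (-(t * ‖z‖^α))) := by
    apply int2.mono'
    · exact ((Real.continuous_exp.comp (by continuity)).aestronglyMeasurable).mul
        int2.aestronglyMeasurable
    · refine Eventually.of_forall fun z => ?_
      have h1 : Real.exp (-(1/2) * ‖z‖^2) ≤ 1 := by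
        rw [Real.exp_le_one_iff]; nlinarith [sq_nonneg ‖z‖]
      rw [Real.norm_eq_abs, _root_.abs_of_nonneg
        (mul_nonneg (Real.exp_nonneg _) (Real.exp_nonneg _))]
      nlinarith [Real.exp_nonneg (-(t * ‖z‖^α)), Real.exp_pos (-(t * ‖z‖^α))]
  apply integral_mono int1 int2
  intro z
  have h1 : Real.exp (-(1/2) * ‖z‖^2) ≤ 1 := by
    rw [Real.exp_le_one_iff]; nlinarith [sq_nonneg ‖z‖]
  nlinarith [Real.exp_nonneg (-(t * ‖z‖^α)), Real.exp_pos (-(t * ‖z‖^α))]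


lemma cexp_gauss_eq (z : EuclideanSpace ℝ (Fin d)) :
    Complex.exp (-(1/2 : ℂ) * (‖z‖ : ℂ)^2) = ((Real.exp (-(1/2) * ‖z‖^2) : ℝ) : ℂ) := by
  rw [show (-(1/2:ℂ) * (‖z‖:ℂ)^2) = ((-(1/2) * ‖z‖^2 : ℝ) : ℂ) by push_cast; ring,
    Complex.ofReal_exp]

lemma integrable_gauss_real :
    Integrable (fun v : EuclideanSpace ℝ (Fin d) => Real.exp (-(1/2) * ‖v‖^2)) := by
  have hb : (0:ℝ) < (1/2 : ℂ).re := by norm_num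
  have h := (GaussianFourier.integrable_cexp_neg_mul_sq_norm_add (V := EuclideanSpace ℝ (Fin d)) hb 0 0).norm
  apply h.congr
  refine Eventually.of_forall fun v => ?_
  simp only [Complex.ofReal_zero, zero_mul, add_zero, inner_zero_left]
  rw [cexp_gauss_eq, Complex.norm_real, Real.norm_eq_abs,
    _root_.abs_of_nonneg (Real.exp_nonneg _)]


lemma fubini_gauss (μ : Measure (EuclideanSpace ℝ (Fin d))) [IsProbabilityMeasure μ] {α t : ℝ}
    (hchar : ∀ z : EuclideanSpace ℝ (Fin d),
      charf μ z = ((Real.exp (-(t * ‖z‖^α)) : ℝ) : ℂ)) :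
    ∫ x, Real.exp (-(1/2) * ‖x‖^2) ∂μ =
      (2*π)^(-((d:ℝ)/2)) *
        ∫ z : EuclideanSpace ℝ (Fin d), Real.exp (-(1/2)*‖z‖^2) * Real.exp (-(t*‖z‖^α)) := by
  set E := EuclideanSpace ℝ (Fin d)
  set f : E → E → ℂ := fun z x =>
    Complex.exp (-(1/2 : ℂ) * (‖z‖ : ℂ)^2) * Complex.exp (Complex.I * ((inner ℝ z x : ℝ) : ℂ))
    with hf
  have hcont : Continuous (Function.uncurry f) := by
    apply Continuous.mul
    · exact Complex.continuous_exp.comp (by continuity)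
    · apply Complex.continuous_exp.comp
      apply Continuous.mul continuous_const
      exact Complex.continuous_ofReal.comp
        (continuous_inner.comp (continuous_fst.prodMk continuous_snd))
  have hdom : Integrable (fun p : E × E => Real.exp (-(1/2) * ‖p.1‖^2) * 1) (volume.prod μ) :=
    Integrable.mul_prod integrable_gauss_real (integrable_const 1)
  have hFint : Integrable (Function.uncurry f) (volume.prod μ) := by
    apply hdom.mono' hcont.aestronglyMeasurable
    refine Eventually.of_forall fun p => ?_
    rw [Function.uncurry, hf]
    simp only []
    rw [norm_mul, cexp_gauss_eq, Complex.norm_real, Real.norm_eq_abs,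
      _root_.abs_of_nonneg (Real.exp_nonneg _)]
    have h1 : ‖Complex.exp (Complex.I * ((inner ℝ p.1 p.2 : ℝ) : ℂ))‖ = 1 := by
      rw [Complex.norm_exp]
      simp
    rw [h1]
  have hswap := integral_integral_swap hFint
  have hlhs : ∫ z, ∫ x, f z x ∂μ = ((∫ z : E, Real.exp (-(1/2)*‖z‖^2) *
      Real.exp (-(t*‖z‖^α)) : ℝ) : ℂ) := by
    have : ∀ z : E, ∫ x, f z x ∂μ =
        ((Real.exp (-(1/2)*‖z‖^2) * Real.exp (-(t*‖z‖^α)) : ℝ) : ℂ) := by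
      intro z
      rw [hf]
      simp only []
      rw [integral_const_mul, ← charf, hchar z, cexp_gauss_eq, ← Complex.ofReal_mul]
    simp_rw [this]
    exact integral_ofReal
  have hrhs : ∫ x, (∫ z, f z x) ∂μ =
      ((((2*π : ℝ)^((d:ℝ)/2)) * ∫ x, Real.exp (-(1/2) * ‖x‖^2) ∂μ : ℝ) : ℂ) := by
    have : ∀ x : E, (∫ z, f z x) = (((2*π : ℝ)^((d:ℝ)/2) : ℝ) : ℂ) *
        ((Real.exp (-(1/2) * ‖x‖^2) : ℝ) : ℂ) := by
      intro x
      rw [hf]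
      simp only []
      rw [gauss_fourier x, cexp_gauss_eq]
    simp_rw [this]
    rw [integral_const_mul, Complex.ofReal_mul]
    congr 1
    exact integral_ofReal
  rw [hlhs, hrhs] at hswap
  have hkey := Complex.ofReal_inj.mp hswap
  have hpos : (0:ℝ) < (2*π)^((d:ℝ)/2) := Real.rpow_pos_of_pos (by positivity) _
  rw [Real.rpow_neg (by positivity), inv_mul_eq_div, eq_div_iff hpos.ne']
  linarith [hkey]

lemma ball_bound (μ : Measure (EuclideanSpace ℝ (Fin d))) [IsProbabilityMeasure μ] {r : ℝ} :
    μ (Metric.ball 0 r) ≤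
      ENNReal.ofReal (Real.exp (r^2/2) * ∫ x, Real.exp (-(1/2) * ‖x‖^2) ∂μ) := by
  have hcont : Continuous (fun x : EuclideanSpace ℝ (Fin d) =>
      Real.exp (r^2/2) * Real.exp (-(1/2) * ‖x‖^2)) := by continuity
  have hg : Integrable (fun x : EuclideanSpace ℝ (Fin d) =>
      Real.exp (r^2/2) * Real.exp (-(1/2) * ‖x‖^2)) μ := by
    apply (integrable_const (Real.exp (r^2/2))).mono' hcont.aestronglyMeasurable
    refine Eventually.of_forall fun x => ?_
    rw [Real.norm_eq_abs, _root_.abs_of_nonneg (by positivity)]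
    have h1 : Real.exp (-(1/2) * ‖x‖^2) ≤ 1 := by
      rw [Real.exp_le_one_iff]; nlinarith [sq_nonneg ‖x‖]
    nlinarith [Real.exp_pos (r^2/2)]
  have hnn : 0 ≤ᵐ[μ] (fun x : EuclideanSpace ℝ (Fin d) =>
      Real.exp (r^2/2) * Real.exp (-(1/2) * ‖x‖^2)) :=
    Eventually.of_forall fun x => by positivity
  rw [← MeasureTheory.lintegral_indicator_one measurableSet_ball]
  have step1 : ∫⁻ x, (Metric.ball (0 : EuclideanSpace ℝ (Fin d)) r).indicator 1 x ∂μ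
      ≤ ∫⁻ x, ENNReal.ofReal (Real.exp (r^2/2) * Real.exp (-(1/2) * ‖x‖^2)) ∂μ := by
    apply lintegral_mono
    intro x
    by_cases hx : x ∈ Metric.ball (0 : EuclideanSpace ℝ (Fin d)) r
    · rw [Set.indicator_of_mem hx]
      have hxr : ‖x‖ < r := by rwa [mem_ball_zero_iff] at hx
      have h2 : (1:ℝ) ≤ Real.exp (r^2/2) * Real.exp (-(1/2) * ‖x‖^2) := by
        rw [← Real.exp_add, Real.one_le_exp_iff]
        nlinarith [norm_nonneg x]
      exact ENNReal.one_le_ofReal.mpr h2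
    · rw [Set.indicator_of_notMem hx]
      exact zero_le
  refine le_trans step1 (le_of_eq ?_)
  rw [← ofReal_integral_eq_lintegral_ofReal hg hnn, integral_const_mul]

lemma gauss_integral_value :
    ∫ z : EuclideanSpace ℝ (Fin d), Real.exp (-(1/2) * ‖z‖^2) = (2*π)^((d:ℝ)/2) := by
  have h := GaussianFourier.integral_rexp_neg_mul_sq_norm
    (V := EuclideanSpace ℝ (Fin d)) (b := 1/2) (by norm_num)
  rw [h, finrank_euclideanSpace_fin]
  congr 1
  ring

end Aux

set_option maxHeartbeats 1600000 in
/-- If `ρ` is a symmetric `α`-stable probability distribution on `ℝ^d`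
(characteristic function `exp(−‖z‖^α)`) with `2α < d`, then `U * U⁻` is locally
finite: `(U * U⁻)(B_0^r) < ∞` for every `r > 0`. -/
theorem stmt12 (d : ℕ) (hd : 1 ≤ d) (α : ℝ) (hα : 0 < α) (h2α : 2 * α < d)
    (ρ : Measure (EuclideanSpace ℝ (Fin d))) [IsProbabilityMeasure ρ]
    (hchar : ∀ z : EuclideanSpace ℝ (Fin d),
      (∫ x, Complex.exp (Complex.I * ((inner ℝ z x : ℝ) : ℂ)) ∂ρ) =
        ((Real.exp (-(‖z‖ ^ α)) : ℝ) : ℂ)) :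
    ∀ r : ℝ, 0 < r →
      mconv (occMeasure ρ) (occMeasure (mrefl ρ)) (Metric.ball 0 r) < ⊤ := by
  intro r hr
  have hcharf : ∀ z : EuclideanSpace ℝ (Fin d),
      charf ρ z = ((Real.exp (-(‖z‖ ^ α)) : ℝ) : ℂ) := hchar
  have hdecomp : mconv (occMeasure ρ) (occMeasure (mrefl ρ)) (Metric.ball 0 r)
      = ∑' p : ℕ × ℕ, mconv (convPow ρ p.1) (convPow (mrefl ρ) p.2) (Metric.ball 0 r) := by
    simp only [occMeasure, mconv]
    rw [Measure.prod_sum, Measure.map_sum measurable_add.aemeasurable]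
    exact Measure.sum_apply _ measurableSet_ball
  set q : ℝ := (d:ℝ)/(2*α) with hqdef
  have hq1 : 1 < q := by rw [hqdef, lt_div_iff₀ (by positivity)]; linarith
  have hq0 : 0 ≤ q := (zero_lt_one.trans hq1).le
  set I := ∫ w : EuclideanSpace ℝ (Fin d), Real.exp (-‖w‖^α) with hIdef
  have hI0 : 0 ≤ I := integral_nonneg (fun w => Real.exp_nonneg _)
  set G2 := (2*Real.pi)^((d:ℝ)/2) with hG2def
  have hG2p : (0:ℝ) < G2 := Real.rpow_pos_of_pos (by positivity) _
  set M := max I G2 with hMdef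
  have hM0 : (0:ℝ) ≤ M := le_trans hG2p.le (le_max_right _ _)
  have h4q : (1:ℝ) ≤ 4^q := by
    calc (1:ℝ) = 1^q := (Real.one_rpow q).symm
      _ ≤ 4^q := Real.rpow_le_rpow zero_le_one (by norm_num) hq0
  set K := Real.exp (r^2/2) * (2*Real.pi)^(-((d:ℝ)/2)) * (M * 4^q) with hKdef
  have hK0 : 0 ≤ K := by
    have : (0:ℝ) ≤ 4^q := le_trans zero_le_one h4q
    positivity
  have hterm : ∀ m n : ℕ, mconv (convPow ρ m) (convPow (mrefl ρ) n) (Metric.ball 0 r)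
      ≤ ENNReal.ofReal (K * (((m:ℝ)+1)^(-q) * ((n:ℝ)+1)^(-q))) := by
    intro m n
    have hchart : ∀ z : EuclideanSpace ℝ (Fin d),
        charf (mconv (convPow ρ m) (convPow (mrefl ρ) n)) z
        = ((Real.exp (-(((m:ℝ)+(n:ℝ)) * ‖z‖^α)) : ℝ) : ℂ) := by
      intro z
      rw [charf_mconv, charf_convPow ρ hcharf m z,
        charf_convPow (mrefl ρ) (charf_mrefl ρ hcharf) n z, ← Complex.ofReal_mul, ← Real.exp_add]
      congr 2
      ring
    have h1 := ball_bound (mconv (convPow ρ m) (convPow (mrefl ρ) n)) (r := r)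
    rw [fubini_gauss _ hchart] at h1
    refine le_trans h1 (ENNReal.ofReal_le_ofReal ?_)
    have ha0 : (0:ℝ) < (m:ℝ)+1 := by positivity
    have hb0 : (0:ℝ) < (n:ℝ)+1 := by positivity
    have hJle : (∫ z : EuclideanSpace ℝ (Fin d),
        Real.exp (-(1/2)*‖z‖^2) * Real.exp (-(((m:ℝ)+(n:ℝ)) * ‖z‖^α)))
        ≤ M * (4^q * (((m:ℝ)+1)^(-q) * ((n:ℝ)+1)^(-q))) := by
      rcases Nat.eq_zero_or_pos (m+n) with hk | hk
      · obtain ⟨hm, hn⟩ := Nat.add_eq_zero.mp hk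
        subst hm; subst hn
        rw [show (∫ z : EuclideanSpace ℝ (Fin d),
            Real.exp (-(1/2)*‖z‖^2) * Real.exp (-((((0:ℕ):ℝ)+((0:ℕ):ℝ)) * ‖z‖^α)))
            = ∫ z : EuclideanSpace ℝ (Fin d), Real.exp (-(1/2)*‖z‖^2) from by norm_num,
          gauss_integral_value]
        have e1 : (((0:ℕ):ℝ)+1)^(-q) = 1 := by norm_num
        rw [e1, ← hG2def]
        have h5 : M * 1 ≤ M * 4^q := mul_le_mul_of_nonneg_left h4q hM0
        nlinarith [le_max_right I G2]
      · have ht : (1:ℝ) ≤ (m:ℝ)+(n:ℝ) := by exact_mod_cast hk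
        have ht0 : (0:ℝ) < (m:ℝ)+(n:ℝ) := lt_of_lt_of_le zero_lt_one ht
        refine (J_bound hα ht).trans ?_
        rw [← hIdef]
        have hβ : (d:ℝ)/α = 2*q := by rw [hqdef]; field_simp
        have habt : ((m:ℝ)+1)*((n:ℝ)+1) ≤ 4*((m:ℝ)+(n:ℝ))^2 := by nlinarith [ht, ha0, hb0]
        have habq : (0:ℝ) < (((m:ℝ)+1)*((n:ℝ)+1))^q := Real.rpow_pos_of_pos (by positivity) _
        have htβ : (0:ℝ) < ((m:ℝ)+(n:ℝ))^((d:ℝ)/α) := Real.rpow_pos_of_pos ht0 _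
        have h2 : (((m:ℝ)+1)*((n:ℝ)+1))^q ≤ (4*((m:ℝ)+(n:ℝ))^2)^q :=
          Real.rpow_le_rpow (by positivity) habt hq0
        have h3 : (4*((m:ℝ)+(n:ℝ))^2)^q = 4^q * ((m:ℝ)+(n:ℝ))^((d:ℝ)/α) := by
          rw [Real.mul_rpow (by norm_num) (sq_nonneg _), hβ]
          congr 1
          rw [← Real.rpow_natCast ((m:ℝ)+(n:ℝ)) 2, ← Real.rpow_mul ht0.le]
          norm_num
        have h4 : (((m:ℝ)+1)*((n:ℝ)+1))^q ≤ 4^q * ((m:ℝ)+(n:ℝ))^((d:ℝ)/α) :=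
          h2.trans (le_of_eq h3)
        have hinv : ((m:ℝ)+(n:ℝ))^(-((d:ℝ)/α)) ≤ 4^q * (((m:ℝ)+1)^(-q) * ((n:ℝ)+1)^(-q)) := by
          rw [← Real.mul_rpow ha0.le hb0.le, Real.rpow_neg ht0.le,
            Real.rpow_neg (by positivity : (0:ℝ) ≤ ((m:ℝ)+1)*((n:ℝ)+1)),
            inv_eq_one_div, inv_eq_one_div, mul_one_div, div_le_div_iff₀ htβ habq]
          linarith [h4]
        calc ((m:ℝ)+(n:ℝ))^(-((d:ℝ)/α)) * I
            ≤ ((m:ℝ)+(n:ℝ))^(-((d:ℝ)/α)) * M :=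
              mul_le_mul_of_nonneg_left (le_max_left _ _)
                (Real.rpow_nonneg ht0.le _)
          _ ≤ (4^q * (((m:ℝ)+1)^(-q) * ((n:ℝ)+1)^(-q))) * M :=
              mul_le_mul_of_nonneg_right hinv hM0
          _ = M * (4^q * (((m:ℝ)+1)^(-q) * ((n:ℝ)+1)^(-q))) := mul_comm _ _
    have hc0 : (0:ℝ) ≤ Real.exp (r^2/2) * (2*Real.pi)^(-((d:ℝ)/2)) := by positivity
    calc Real.exp (r^2/2) * ((2*Real.pi)^(-((d:ℝ)/2)) * ∫ z : EuclideanSpace ℝ (Fin d),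
          Real.exp (-(1/2)*‖z‖^2) * Real.exp (-(((m:ℝ)+(n:ℝ)) * ‖z‖^α)))
        = (Real.exp (r^2/2) * (2*Real.pi)^(-((d:ℝ)/2))) * ∫ z : EuclideanSpace ℝ (Fin d),
          Real.exp (-(1/2)*‖z‖^2) * Real.exp (-(((m:ℝ)+(n:ℝ)) * ‖z‖^α)) := by ring
      _ ≤ (Real.exp (r^2/2) * (2*Real.pi)^(-((d:ℝ)/2)))
            * (M * (4^q * (((m:ℝ)+1)^(-q) * ((n:ℝ)+1)^(-q)))) :=
          mul_le_mul_of_nonneg_left hJle hc0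
      _ = K * (((m:ℝ)+1)^(-q) * ((n:ℝ)+1)^(-q)) := by rw [hKdef]; ring
  rw [hdecomp]
  refine lt_of_le_of_lt (ENNReal.tsum_le_tsum (fun p : ℕ × ℕ => hterm p.1 p.2)) ?_
  have hnn : ∀ n : ℕ, 0 ≤ ((n:ℝ)+1)^(-q) := fun n => Real.rpow_nonneg (by positivity) _
  have hsummable : Summable (fun n : ℕ => ((n:ℝ)+1)^(-q)) := by
    have h0 : Summable (fun n : ℕ => 1/(n:ℝ)^q) := Real.summable_one_div_nat_rpow.mpr hq1
    have h1 : Summable (fun n : ℕ => 1/(((n+1:ℕ)):ℝ)^q) := (summable_nat_add_iff 1).mpr h0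
    apply h1.congr
    intro n
    push_cast
    rw [Real.rpow_neg (by positivity), one_div]
  set S := ∑' n : ℕ, ENNReal.ofReal (((n:ℝ)+1)^(-q)) with hSdef
  have hSfin : S ≠ ⊤ := by
    rw [hSdef, ← ENNReal.ofReal_tsum_of_nonneg hnn hsummable]
    exact ENNReal.ofReal_ne_top
  have hsplit : ∀ p : ℕ × ℕ, ENNReal.ofReal (K * (((p.1:ℝ)+1)^(-q) * ((p.2:ℝ)+1)^(-q)))
      = ENNReal.ofReal K *
        (ENNReal.ofReal (((p.1:ℝ)+1)^(-q)) * ENNReal.ofReal (((p.2:ℝ)+1)^(-q))) := by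
    intro p
    rw [ENNReal.ofReal_mul hK0, ENNReal.ofReal_mul (hnn p.1)]
  calc ∑' p : ℕ × ℕ, ENNReal.ofReal (K * (((p.1:ℝ)+1)^(-q) * ((p.2:ℝ)+1)^(-q)))
      = ∑' p : ℕ × ℕ, ENNReal.ofReal K *
        (ENNReal.ofReal (((p.1:ℝ)+1)^(-q)) * ENNReal.ofReal (((p.2:ℝ)+1)^(-q))) :=
        tsum_congr hsplit
    _ = ENNReal.ofReal K * ∑' p : ℕ × ℕ,
        (ENNReal.ofReal (((p.1:ℝ)+1)^(-q)) * ENNReal.ofReal (((p.2:ℝ)+1)^(-q))) :=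
        ENNReal.tsum_mul_left
    _ = ENNReal.ofReal K * (S * S) := by
        congr 1
        rw [ENNReal.tsum_prod']
        simp_rw [ENNReal.tsum_mul_left]
        rw [ENNReal.tsum_mul_right]
    _ < ⊤ := ENNReal.mul_lt_top ENNReal.ofReal_lt_top
        (ENNReal.mul_lt_top hSfin.lt_top hSfin.lt_top)
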